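/- arXiv:0705.3006 — 14 statements merged into one kernel-verified Lean document; each statement's English description precedes it below -/
import Mathlib

section
/- Let G be a finite group and let u = Σ_{g∈G} a_g·g be a torsion unit in V(ℤG) with u ≠ 1. Then the coefficient a_1 of the identity element of G in u is 0 (Berman–Higman theorem). Consequently, the partial augmentation of u at the conjugacy class {1} is 0 and the sum of the partial augmentations of u over all conjugacy classes of G equals 1. -/
open scoped Classical

open Polynomial

noncomputable def maBasis (G : Type*) [Group G] : Module.Basis G ℤ (MonoidAlgebra ℤ G) :=
  MonoidAlgebra.basis G ℤ

lemma diag_eq {G : Type*} [Group G] [Fintype G] (x : MonoidAlgebra ℤ G) (g : G) :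
    Algebra.leftMulMatrix (maBasis G) x g g = x.coeff 1 := by
  rw [Algebra.leftMulMatrix_eq_repr_mul]
  show (x * MonoidAlgebra.single g 1 : MonoidAlgebra ℤ G).coeff g = x.coeff 1
  rw [MonoidAlgebra.coeff_mul_single_apply, mul_inv_cancel, mul_one]

lemma trace_eq {G : Type*} [Group G] [Fintype G] (x : MonoidAlgebra ℤ G) :
    Matrix.trace (Algebra.leftMulMatrix (maBasis G) x) = (Fintype.card G : ℤ) * x.coeff 1 := by
  simp only [Matrix.trace, Matrix.diag]
  rw [Finset.sum_congr rfl fun g _ => diag_eq x g]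
  simp [mul_comm]


lemma multiset_all_eq_one : ∀ (s : Multiset ℝ), (∀ x ∈ s, x ≤ 1) →
    s.sum = (Multiset.card s : ℝ) → ∀ x ∈ s, x = 1 := by
  intro s
  induction s using Multiset.induction_on with
  | empty => simp
  | cons a t ih =>
    intro h1 hsum x hx
    have hts : t.sum ≤ (Multiset.card t : ℝ) := by
      simpa using Multiset.sum_le_card_nsmul t 1 (fun y hy => h1 y (Multiset.mem_cons_of_mem hy))
    have ha : a ≤ 1 := h1 a (Multiset.mem_cons_self a t)
    rw [Multiset.sum_cons, Multiset.card_cons] at hsum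
    push_cast at hsum
    have ha1 : a = 1 := by linarith
    have ht : t.sum = (Multiset.card t : ℝ) := by linarith
    rcases Multiset.mem_cons.mp hx with rfl | hx
    · exact ha1
    · exact ih (fun y hy => h1 y (Multiset.mem_cons_of_mem hy)) ht x hx

lemma root_pow_eq_one {m : Type*} [Fintype m] [DecidableEq m]
    (A : Matrix m m ℂ) {n : ℕ} (h1 : A ^ n = 1) {μ : ℂ}
    (hμ : μ ∈ A.charpoly.roots) : μ ^ n = 1 := by
  have hp0 : A.charpoly ≠ 0 := A.charpoly_monic.ne_zero
  have hroot : A.charpoly.IsRoot μ := (Polynomial.mem_roots hp0).mp hμ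
  have heval : A.charpoly.eval μ = (Matrix.scalar m μ - A).det := by
    rw [Matrix.charpoly, eval_det, Matrix.matPolyEquiv_charmatrix]
    simp
  have hdet : (Matrix.scalar m μ - A).det = 0 := by rw [← heval]; exact hroot
  obtain ⟨v, hv0, hv⟩ := (Matrix.exists_mulVec_eq_zero_iff).mpr hdet
  have hAv : A.mulVec v = μ • v := by
    rw [Matrix.sub_mulVec] at hv
    have hs : (Matrix.scalar m μ).mulVec v = μ • v := by
      ext i
      simp [Matrix.scalar, Matrix.mulVec_diagonal]
    rw [hs, sub_eq_zero] at hv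
    exact hv.symm
  have hpow : ∀ k : ℕ, (A ^ k).mulVec v = μ ^ k • v := by
    intro k
    induction k with
    | zero => simp
    | succ k ih =>
      rw [pow_succ', pow_succ', ← Matrix.mulVec_mulVec, ih, Matrix.mulVec_smul, hAv,
        smul_smul, mul_comm]
  have hn := hpow n
  rw [h1] at hn
  simp only [Matrix.one_mulVec] at hn
  obtain ⟨i, hi⟩ := Function.ne_iff.mp hv0
  have hvi := congrFun hn i
  simp only [Pi.smul_apply, smul_eq_mul] at hvi
  have : (μ ^ n - 1) * v i = 0 := by linear_combination -hvi
  rcases mul_eq_zero.mp this with h | h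
  · exact sub_eq_zero.mp h
  · exact absurd h (by simpa using hi)

lemma matrix_eq_one_of_trace {m : Type*} [Fintype m] [DecidableEq m] [Nonempty m]
    (A : Matrix m m ℂ) {n : ℕ} (hn : n ≠ 0) (h1 : A ^ n = 1)
    (htr : A.trace = (Fintype.card m : ℂ)) : A = 1 := by
  set p := A.charpoly with hp
  have hsp : p.Splits := IsAlgClosed.splits p
  have hdeg : p.natDegree = Fintype.card m := A.charpoly_natDegree_eq_dim
  have hcard : Multiset.card p.roots = Fintype.card m :=
    (Polynomial.splits_iff_card_roots.mp hsp).trans hdeg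
  have habs : ∀ μ ∈ p.roots, ‖μ‖ = 1 := by
    intro μ hμ
    have hpow : μ ^ n = 1 := root_pow_eq_one A h1 hμ
    have h := congrArg norm hpow
    rw [norm_pow, norm_one] at h
    have h0 : (0:ℝ) ≤ ‖μ‖ := norm_nonneg μ
    rcases lt_trichotomy (‖μ‖) 1 with hlt | heq | hgt
    · exact absurd h (by have := pow_lt_one₀ h0 hlt hn; linarith)
    · exact heq
    · exact absurd h (by have := one_lt_pow₀ hgt hn; linarith)
  -- real parts
  have htr' : A.trace = p.roots.sum := A.trace_eq_sum_roots_charpoly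
  have hre_sum : (Multiset.map Complex.re p.roots).sum = (Fintype.card m : ℝ) := by
    have := congrArg Complex.re (htr'.symm.trans htr)
    rw [Complex.natCast_re] at this
    rw [← this]
    exact (Complex.reAddGroupHom.map_multiset_sum p.roots).symm
  have hre_le : ∀ x ∈ Multiset.map Complex.re p.roots, x ≤ 1 := by
    rintro x hx
    obtain ⟨μ, hμ, rfl⟩ := Multiset.mem_map.mp hx
    calc μ.re ≤ |μ.re| := le_abs_self _
    _ ≤ ‖μ‖ := Complex.abs_re_le_norm μ
    _ = 1 := habs μ hμ
  have hre_one : ∀ x ∈ Multiset.map Complex.re p.roots, x = 1 := by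
    apply multiset_all_eq_one _ hre_le
    rw [hre_sum, Multiset.card_map, hcard]
  have hroots_one : ∀ μ ∈ p.roots, μ = 1 := by
    intro μ hμ
    have h1re : μ.re = 1 := hre_one μ.re (Multiset.mem_map_of_mem _ hμ)
    have hsq : ‖μ‖ ^ 2 = Complex.normSq μ := Complex.sq_norm μ
    rw [habs μ hμ, Complex.normSq_apply, h1re] at hsq
    have him : μ.im = 0 := by nlinarith
    exact Complex.ext h1re him
  have hrepl : p.roots = Multiset.replicate (Fintype.card m) 1 :=
    Multiset.eq_replicate.mpr ⟨hcard, hroots_one⟩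
  have hpeq : p = (Polynomial.X - Polynomial.C 1) ^ Fintype.card m := by
    have := hsp.eq_prod_roots_of_monic A.charpoly_monic
    rw [hrepl, Multiset.map_replicate, Multiset.prod_replicate] at this
    exact this
  -- minimal polynomial
  set q := minpoly ℂ A with hq
  have hint : IsIntegral ℂ A := Matrix.isIntegral A
  have hqdvd : q ∣ (Polynomial.X - Polynomial.C 1) ^ Fintype.card m := by
    rw [← hpeq]; exact A.minpoly_dvd_charpoly
  have hqn : q ∣ Polynomial.X ^ n - 1 := by
    apply minpoly.dvd
    simp [h1]
  have hsep : (Polynomial.X ^ n - Polynomial.C (1:ℂ)).Separable :=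
    Polynomial.separable_X_pow_sub_C 1 (by exact_mod_cast hn) one_ne_zero
  have hsqf : Squarefree q := by
    apply Squarefree.squarefree_of_dvd _ hsep.squarefree
    simpa using hqn
  obtain ⟨k, hkN, hkassoc⟩ :=
    (dvd_prime_pow (Polynomial.prime_X_sub_C (1:ℂ)) (Fintype.card m)).mp hqdvd
  have hk0 : k ≠ 0 := by
    rintro rfl
    rw [pow_zero] at hkassoc
    have : IsUnit q := associated_one_iff_isUnit.mp hkassoc
    exact (minpoly.not_isUnit ℂ A) this
  have hk1 : k = 1 := by
    by_contra hk
    have hk2 : 2 ≤ k := by omega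
    have : (Polynomial.X - Polynomial.C (1:ℂ)) * (Polynomial.X - Polynomial.C 1) ∣ q := by
      have h2 : (Polynomial.X - Polynomial.C (1:ℂ)) ^ 2 ∣
          (Polynomial.X - Polynomial.C (1:ℂ)) ^ k := pow_dvd_pow _ hk2
      rw [sq] at h2
      exact h2.trans hkassoc.symm.dvd
    exact Polynomial.not_isUnit_X_sub_C 1 (hsqf _ this)
  rw [hk1, pow_one] at hkassoc
  have hqeq : q = Polynomial.X - Polynomial.C 1 :=
    Polynomial.eq_of_monic_of_associated (minpoly.monic hint) (Polynomial.monic_X_sub_C 1)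
      hkassoc
  have := minpoly.aeval ℂ A
  rw [← hq, hqeq] at this
  simpa [sub_eq_zero] using this

lemma multiset_re_bounds (s : Multiset ℝ) (h : ∀ x ∈ s, |x| ≤ 1) :
    |s.sum| ≤ (Multiset.card s : ℝ) := by
  have h1 : s.sum ≤ (Multiset.card s : ℝ) := by
    simpa using Multiset.sum_le_card_nsmul s 1 (fun x hx => (abs_le.mp (h x hx)).2)
  have h2 : -(Multiset.card s : ℝ) ≤ s.sum := by
    have := Multiset.card_nsmul_le_sum (s := s) (a := (-1:ℝ))
      (fun x hx => (abs_le.mp (h x hx)).1)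
    simpa using this
  rw [abs_le]; exact ⟨h2, h1⟩

lemma key_trichotomy {m : Type*} [Fintype m] [DecidableEq m] [Nonempty m]
    (A : Matrix m m ℂ) {n : ℕ} (hn : n ≠ 0) (h1 : A ^ n = 1) (a : ℤ)
    (htr : A.trace = (Fintype.card m : ℂ) * (a : ℂ)) :
    a = 0 ∨ A = 1 ∨ A = -1 := by
  set p := A.charpoly with hp
  have hsp : p.Splits := IsAlgClosed.splits p
  have hdeg : p.natDegree = Fintype.card m := A.charpoly_natDegree_eq_dim
  have hcard : Multiset.card p.roots = Fintype.card m :=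
    (Polynomial.splits_iff_card_roots.mp hsp).trans hdeg
  have habs : ∀ μ ∈ p.roots, ‖μ‖ = 1 := by
    intro μ hμ
    have h := congrArg norm (root_pow_eq_one A h1 hμ)
    rw [norm_pow, norm_one] at h
    have h0 : (0:ℝ) ≤ ‖μ‖ := norm_nonneg μ
    rcases lt_trichotomy (‖μ‖) 1 with hlt | heq | hgt
    · exact absurd h (by have := pow_lt_one₀ h0 hlt hn; linarith)
    · exact heq
    · exact absurd h (by have := one_lt_pow₀ hgt hn; linarith)
  have htr' : A.trace = p.roots.sum := A.trace_eq_sum_roots_charpoly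
  have hre_sum : (Multiset.map Complex.re p.roots).sum = (Fintype.card m : ℝ) * (a : ℝ) := by
    have := congrArg Complex.re (htr'.symm.trans htr)
    rw [show ((Fintype.card m : ℂ) * (a:ℂ)) = (((Fintype.card m : ℝ) * (a:ℝ) : ℝ) : ℂ) by
      push_cast; ring, Complex.ofReal_re] at this
    rw [← this]
    exact (Complex.reAddGroupHom.map_multiset_sum p.roots).symm
  have hbound := multiset_re_bounds (Multiset.map Complex.re p.roots) (by
    rintro x hx
    obtain ⟨μ, hμ, rfl⟩ := Multiset.mem_map.mp hx
    calc |μ.re| ≤ ‖μ‖ := Complex.abs_re_le_norm μ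
    _ = 1 := habs μ hμ)
  rw [hre_sum, Multiset.card_map, hcard] at hbound
  have hN : (0:ℝ) < (Fintype.card m : ℝ) := by
    exact_mod_cast Fintype.card_pos
  have haR : |(a:ℝ)| ≤ 1 := by
    rw [abs_mul, abs_of_pos hN] at hbound
    nlinarith [abs_nonneg (a:ℝ)]
  have hl : -1 ≤ a := by exact_mod_cast (abs_le.mp haR).1
  have hr : a ≤ 1 := by exact_mod_cast (abs_le.mp haR).2
  interval_cases a
  · -- a = -1
    right; right
    have h2n : 2 * n ≠ 0 := by omega
    have hneg : (-A) ^ (2 * n) = 1 := by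
      rw [Even.neg_pow ⟨n, by ring⟩, mul_comm 2 n, pow_mul, h1, one_pow]
    have htrneg : (-A).trace = (Fintype.card m : ℂ) := by
      rw [Matrix.trace_neg, htr]
      push_cast
      ring
    have := matrix_eq_one_of_trace (-A) h2n hneg htrneg
    exact neg_eq_iff_eq_neg.mp this
  · left; rfl
  · right; left
    apply matrix_eq_one_of_trace A hn h1
    rw [htr]; push_cast; ring

/-- **Berman–Higman theorem.** If `u` is a nontrivial torsion unit of augmentation `1`
in the integral group ring `ℤG` of a finite group `G`, then the coefficient of the
identity element in `u` is `0`; consequently the partial augmentation of `u` at the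
conjugacy class `{1}` vanishes and the partial augmentations of `u` over all conjugacy
classes of `G` sum to `1`. -/
theorem berman_higman {G : Type*} [Group G] [Fintype G]
    (u : (MonoidAlgebra ℤ G)ˣ)
    (hnorm : ∑ g : G, (u : MonoidAlgebra ℤ G).coeff g = 1)
    (htor : IsOfFinOrder u)
    (hne : u ≠ 1) :
    (u : MonoidAlgebra ℤ G).coeff 1 = 0 ∧
    (∑ g ∈ Finset.univ.filter (fun g : G => ConjClasses.mk g = ConjClasses.mk (1 : G)),
        (u : MonoidAlgebra ℤ G).coeff g) = 0 ∧
    (∑ C : ConjClasses G,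
        ∑ g ∈ Finset.univ.filter (fun g : G => ConjClasses.mk g = C),
          (u : MonoidAlgebra ℤ G).coeff g) = 1 := by
  haveI : Nonempty G := ⟨1⟩
  have hkey : (u : MonoidAlgebra ℤ G).coeff 1 = 0 := by
    set M : Matrix G G ℤ := Algebra.leftMulMatrix (maBasis G) (u : MonoidAlgebra ℤ G) with hM
    set A : Matrix G G ℂ := ((Int.castRingHom ℂ).mapMatrix) M with hA
    have hn : orderOf u ≠ 0 := (htor.orderOf_pos).ne'
    have hMn : M ^ orderOf u = 1 := by
      rw [hM, ← map_pow]
      have hu1 : ((u : MonoidAlgebra ℤ G)) ^ orderOf u = 1 := by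
        rw [← Units.val_pow_eq_pow_val, pow_orderOf_eq_one, Units.val_one]
      rw [hu1, map_one]
    have hAn : A ^ orderOf u = 1 := by rw [hA, ← map_pow, hMn, map_one]
    have htrM : M.trace = (Fintype.card G : ℤ) * (u : MonoidAlgebra ℤ G).coeff 1 := trace_eq _
    have htrA : A.trace = (Fintype.card G : ℂ) * (((u : MonoidAlgebra ℤ G).coeff 1 : ℤ) : ℂ) := by
      have h1 : A.trace = ((M.trace : ℤ) : ℂ) := by
        simp [hA, Matrix.trace, Matrix.diag, RingHom.mapMatrix_apply, Matrix.map_apply]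
      rw [h1, htrM]; push_cast; ring
    have hinj : Function.Injective ((Int.castRingHom ℂ).mapMatrix :
        Matrix G G ℤ →+* Matrix G G ℂ) := by
      intro X Y h
      ext i j
      have h2 : ((X i j : ℤ) : ℂ) = ((Y i j : ℤ) : ℂ) := by
        have h3 := congrFun (congrFun h i) j
        simpa [RingHom.mapMatrix_apply, Matrix.map_apply] using h3
      exact_mod_cast h2
    rcases key_trichotomy A hn hAn _ htrA with h0 | h1 | hm1
    · exact h0
    · exfalso; apply hne
      have hM1 : M = 1 := hinj (by rw [← hA, h1, map_one])
      have : (u : MonoidAlgebra ℤ G) = 1 :=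
        Algebra.leftMulMatrix_injective (maBasis G) (by rw [← hM, hM1, map_one])
      exact Units.ext this
    · exfalso
      have hM1 : M = -1 := hinj (by rw [← hA, hm1, map_neg, map_one])
      have hu : (u : MonoidAlgebra ℤ G) = -1 :=
        Algebra.leftMulMatrix_injective (maBasis G) (by rw [← hM, hM1, map_neg, map_one])
      rw [hu] at hnorm
      have hsum : ∑ g : G, (-1 : MonoidAlgebra ℤ G).coeff g = -1 := by
        have hone : ∀ g : G, (-1 : MonoidAlgebra ℤ G).coeff g =
            -(if (1:G) = g then (1:ℤ) else 0) := by
          intro g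
          rw [show (-1 : MonoidAlgebra ℤ G) = -(MonoidAlgebra.single 1 1) by
            rw [MonoidAlgebra.one_def]]
          rw [MonoidAlgebra.coeff_neg, Finsupp.neg_apply, MonoidAlgebra.coeff_single,
              Finsupp.single_apply]
        rw [Finset.sum_congr rfl fun g _ => hone g]
        simp
      rw [hsum] at hnorm
      norm_num at hnorm
  refine ⟨hkey, ?_, ?_⟩
  · have hfil : Finset.univ.filter (fun g : G => ConjClasses.mk g = ConjClasses.mk (1 : G))
        = {1} := by
      ext g
      simp only [Finset.mem_filter, Finset.mem_univ, true_and, Finset.mem_singleton,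
        ConjClasses.mk_eq_mk_iff_isConj]
      exact isConj_one_left
    rw [hfil, Finset.sum_singleton, hkey]
  · rw [Finset.sum_fiberwise Finset.univ (fun g : G => ConjClasses.mk g)
      (fun g => (u : MonoidAlgebra ℤ G).coeff g)]
    exact hnorm
end

section
/- Let G be a finite group, let u ∈ V(ℤG) have finite order k, let z ∈ ℂ be a primitive k-th root of unity, and let χ be the character of a finite-dimensional complex representation of G, extended ℂ-linearly to the group ring (so that χ(v) = Σ_{g} a_g·χ(g) for v = Σ a_g·g). Then for every integer l and every divisor d of k, the number χ(u^d)·z^{−dl} lies in the cyclotomic field ℚ(z^d), and the number μ_l(u,χ) = (1/k)·Σ_{d|k} Tr_{ℚ(z^d)/ℚ}(χ(u^d)·z^{−dl}) is a non-negative integer (Luthar–Passi criterion, ordinary character case). -/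
open scoped Classical

open Finset in
lemma aux_geom (k : ℕ) (w : ℂ) (hwk : w ^ k = 1) (hw1 : w ≠ 1) :
    ∑ j ∈ Finset.range k, w ^ j = 0 := by
  rw [geom_sum_eq hw1, hwk, sub_self, zero_div]

open Finset LinearMap in
lemma aux_trace {W : Type*} [AddCommGroup W] [Module ℂ W] [FiniteDimensional ℂ W]
    (U : Module.End ℂ W) (k : ℕ) (hk : 0 < k) (hU : U ^ k = 1)
    (z : ℂ) (hz : IsPrimitiveRoot z k) :
    ∃ m : ℕ → ℕ, ∀ n : ℕ,
      LinearMap.trace ℂ W (U ^ n) = ∑ c ∈ Finset.range k, (m c : ℂ) * z ^ (c * n) := by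
  have hz0 : z ≠ 0 := fun h => by
    have := hz.pow_eq_one
    rw [h, zero_pow hk.ne'] at this
    exact zero_ne_one this
  have hzk : ∀ c : ℕ, z ^ (c * k) = 1 := fun c => by
    rw [mul_comm, pow_mul, hz.pow_eq_one, one_pow]
  set P : ℕ → Module.End ℂ W :=
    fun c => (k : ℂ)⁻¹ • ∑ j ∈ range k, (z ^ (c * j))⁻¹ • U ^ j with hP
  -- orthogonality of characters
  have horth : ∀ n ∈ range k, ∀ j ∈ range k,
      ∑ c ∈ range k, z ^ (c * n) * (z ^ (c * j))⁻¹ = if j = n then (k : ℂ) else 0 := by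
    intro n hn j hj
    have hrw : ∀ c : ℕ, z ^ (c * n) * (z ^ (c * j))⁻¹ = (z ^ n * (z ^ j)⁻¹) ^ c := by
      intro c
      rw [mul_pow, mul_comm c n, pow_mul, mul_comm c j, pow_mul, inv_pow]
    simp only [hrw]
    by_cases h : j = n
    · subst h
      rw [mul_inv_cancel₀ (pow_ne_zero _ hz0)]
      simp
    · rw [if_neg h]
      refine aux_geom k _ ?_ ?_
      · rw [mul_pow, ← pow_mul, mul_comm n k, pow_mul, hz.pow_eq_one, one_pow, inv_pow,
          ← pow_mul, mul_comm j k, pow_mul, hz.pow_eq_one, one_pow, inv_one, one_mul]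
      · intro hw
        apply h
        have : z ^ j = z ^ n := by
          field_simp at hw
          exact hw.symm
        exact (hz.pow_inj (mem_range.1 hj) (mem_range.1 hn) this)
  -- Fourier inversion
  have hA : ∀ n ∈ range k, ∑ c ∈ range k, z ^ (c * n) • P c = U ^ n := by
    intro n hn
    have : ∑ c ∈ range k, z ^ (c * n) • P c
        = (k : ℂ)⁻¹ • ∑ j ∈ range k, (∑ c ∈ range k, z ^ (c * n) * (z ^ (c * j))⁻¹) • U ^ j := by
      simp only [hP, smul_smul, Finset.smul_sum, Finset.sum_smul]
      rw [Finset.sum_comm]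
      refine Finset.sum_congr rfl fun j _ => Finset.sum_congr rfl fun c _ => ?_
      congr 1
      ring
    rw [this]
    have : ∑ j ∈ range k, (∑ c ∈ range k, z ^ (c * n) * (z ^ (c * j))⁻¹) • U ^ j
        = (k : ℂ) • U ^ n := by
      rw [Finset.sum_congr rfl (fun j hj => by rw [horth n hn j hj])]
      rw [Finset.sum_eq_single n]
      · rw [if_pos rfl]
      · intro j _ hjn
        rw [if_neg hjn, zero_smul]
      · intro hnn
        exact absurd hn hnn
    rw [this, smul_smul, inv_mul_cancel₀ (by exact_mod_cast hk.ne'), one_smul]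
  -- U * P c = z^c • P c
  have hUP : ∀ c, U * P c = z ^ c • P c := by
    intro c
    have hq0 : (z ^ (c * k))⁻¹ • U ^ k = (z ^ (c * 0))⁻¹ • U ^ 0 := by
      rw [hzk, hU, mul_zero, pow_zero, pow_zero]
    have hshift : ∑ j ∈ range k, (z ^ (c * (j + 1)))⁻¹ • U ^ (j + 1)
        = ∑ j ∈ range k, (z ^ (c * j))⁻¹ • U ^ j := by
      have h1 := Finset.sum_range_succ' (fun j => (z ^ (c * j))⁻¹ • U ^ j) k
      have h2 := Finset.sum_range_succ (fun j => (z ^ (c * j))⁻¹ • U ^ j) k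
      rw [h2, hq0] at h1
      -- h1 : ∑_{j<k} f j + f 0 ... careful
      -- h1 : (∑ j in range k, f j) + f 0 = (∑ j in range k, f (j+1)) + f 0
      -- h2 : ∑ i in range (k+1), f i = ∑ i in range k, f i + f k
      -- so (∑ f i) + f 0 = (∑ f (i+1)) + f 0  (after rw hq0 turning f k into f 0)
      exact (add_right_cancel h1).symm
    calc U * P c = (k : ℂ)⁻¹ • ∑ j ∈ range k, (z ^ (c * j))⁻¹ • U ^ (j + 1) := by
          rw [hP, mul_smul_comm, Finset.mul_sum]
          congr 1
          refine Finset.sum_congr rfl fun j _ => ?_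
          rw [mul_smul_comm, ← pow_succ']
      _ = (k : ℂ)⁻¹ • ∑ j ∈ range k, z ^ c • ((z ^ (c * (j + 1)))⁻¹ • U ^ (j + 1)) := by
          congr 1
          refine Finset.sum_congr rfl fun j _ => ?_
          rw [smul_smul]
          congr 1
          rw [Nat.mul_succ, pow_add, mul_inv]
          field_simp
      _ = z ^ c • P c := by
          rw [← Finset.smul_sum, hshift, hP, smul_comm]
  -- U^n * P c = z^(c*n) • P c
  have hUnP : ∀ (n c : ℕ), U ^ n * P c = z ^ (c * n) • P c := by
    intro n c
    induction n with
    | zero => simp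
    | succ n ih =>
        rw [pow_succ, mul_assoc, hUP, mul_smul_comm, ih, smul_smul, Nat.mul_succ, pow_add, mul_comm]
  -- idempotency
  have hPP : ∀ c, P c * P c = P c := by
    intro c
    have : P c * P c = (k : ℂ)⁻¹ • ∑ j ∈ range k, (z ^ (c * j))⁻¹ • (U ^ j * P c) := by
      conv_lhs => rw [hP]
      simp only [smul_mul_assoc, Finset.sum_mul]
      rfl
    rw [this]
    have : ∀ j ∈ range k, (z ^ (c * j))⁻¹ • (U ^ j * P c) = P c := by
      intro j _
      rw [hUnP, smul_smul, inv_mul_cancel₀ (pow_ne_zero _ hz0), one_smul]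
    rw [Finset.sum_congr rfl this, Finset.sum_const, Finset.card_range,
      ← Nat.cast_smul_eq_nsmul ℂ, smul_smul, inv_mul_cancel₀ (by exact_mod_cast hk.ne'), one_smul]
  -- trace of projector
  have hproj : ∀ c, LinearMap.IsProj (LinearMap.range (P c)) (P c) := by
    intro c
    refine ⟨fun x => LinearMap.mem_range_self _ x, ?_⟩
    rintro x ⟨y, rfl⟩
    exact congrFun (congrArg DFunLike.coe (hPP c)) y
  refine ⟨fun c => Module.finrank ℂ (LinearMap.range (P c)), fun n => ?_⟩
  have htrP : ∀ c, LinearMap.trace ℂ W (P c)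
      = (Module.finrank ℂ (LinearMap.range (P c)) : ℂ) := fun c => (hproj c).trace
  -- reduce to n % k
  have hUn : U ^ n = U ^ (n % k) := by
    conv_lhs => rw [← Nat.div_add_mod n k]
    rw [pow_add, pow_mul, hU, one_pow, one_mul]
  have hzn : ∀ c : ℕ, z ^ (c * n) = z ^ (c * (n % k)) := by
    intro c
    rw [mul_comm c n, pow_mul, mul_comm c (n % k), pow_mul]
    conv_lhs => rw [← Nat.div_add_mod n k]
    rw [pow_add, pow_mul, hz.pow_eq_one, one_pow, one_mul]
  rw [hUn, ← hA (n % k) (mem_range.2 (Nat.mod_lt _ hk)), map_sum]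
  refine Finset.sum_congr rfl fun c _ => ?_
  rw [map_smul, smul_eq_mul, htrP, hzn, mul_comm]

set_option maxHeartbeats 1000000 in
open Finset IntermediateField Polynomial in
/-- **Luthar–Passi criterion (ordinary character case).** Let `u` be a normalized
torsion unit of order `k` in `ℤG`, `z ∈ ℂ` a primitive `k`-th root of unity, and `χ`
the character of a finite-dimensional complex representation of `G` extended
`ℂ`-linearly to the group ring. Then for every integer `l` and every divisor `d` of
`k` the number `χ(u^d)·z^{-dl}` lies in the cyclotomic field `ℚ(z^d)`, and the number
`μ_l(u,χ) = (1/k)·∑_{d ∣ k} Tr_{ℚ(z^d)/ℚ}(χ(u^d)·z^{-dl})` is a non-negative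
integer. -/
theorem luthar_passi_mu_nonneg_integer
    {G : Type*} [Group G] [Fintype G]
    {V : Type*} [AddCommGroup V] [Module ℂ V] [FiniteDimensional ℂ V]
    (ρ : Representation ℂ G V)
    (u : (MonoidAlgebra ℤ G)ˣ)
    (hnorm : ∑ g : G, (u : MonoidAlgebra ℤ G).coeff g = 1)
    (k : ℕ) (hk : 0 < k) (hord : orderOf u = k)
    (z : ℂ) (hz : IsPrimitiveRoot z k)
    (χ : MonoidAlgebra ℤ G → ℂ)
    (hχ : ∀ v : MonoidAlgebra ℤ G,
      χ v = ∑ g : G, (v.coeff g : ℂ) * LinearMap.trace ℂ V (ρ g))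
    (l : ℤ) :
    ∃ hmem : ∀ d ∈ k.divisors,
        χ ((u ^ d : (MonoidAlgebra ℤ G)ˣ) : MonoidAlgebra ℤ G) * z ^ (-(d : ℤ) * l)
          ∈ IntermediateField.adjoin ℚ {z ^ d},
      ∃ m : ℕ,
        (1 / (k : ℚ)) *
          ∑ d ∈ k.divisors.attach,
            Algebra.trace ℚ (IntermediateField.adjoin ℚ {z ^ (d : ℕ)})
              ⟨χ ((u ^ (d : ℕ) : (MonoidAlgebra ℤ G)ˣ) : MonoidAlgebra ℤ G) *
                  z ^ (-((d : ℕ) : ℤ) * l), hmem d d.2⟩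
          = (m : ℚ) := by

  have hz0 : z ≠ 0 := fun h => by
    have := hz.pow_eq_one
    rw [h, zero_pow hk.ne'] at this
    exact zero_ne_one this
  -- the ring homomorphism extending ρ to the integral group ring
  set Ψ : MonoidAlgebra ℤ G →+* Module.End ℂ V :=
    MonoidAlgebra.liftNCRingHom (Int.castRingHom (Module.End ℂ V)) ρ
      (fun r a => (Int.cast_commute r _)) with hΨ
  set U : Module.End ℂ V := Ψ ↑u with hUdef
  have hUk : U ^ k = 1 := by
    rw [hUdef, ← map_pow, ← Units.val_pow_eq_pow_val, ← hord, pow_orderOf_eq_one,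
      Units.val_one, map_one]
  have hsingle : ∀ (g₀ : G) (a : ℤ), Ψ (MonoidAlgebra.single g₀ a) = a • ρ g₀ := by
    intro g₀ a
    show MonoidAlgebra.liftNC _ _ _ = _
    rw [MonoidAlgebra.liftNC_single, zsmul_eq_mul]
    rfl
  have hχΨ : ∀ v : MonoidAlgebra ℤ G, χ v = LinearMap.trace ℂ V (Ψ v) := by
    intro v
    rw [hχ]
    have hv : v = ∑ g : G, MonoidAlgebra.single g (v.coeff g) := by
      conv_lhs => rw [← MonoidAlgebra.ofCoeff_coeff v, ← Finsupp.univ_sum_single v.coeff,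
        MonoidAlgebra.ofCoeff_sum]
      simp only [MonoidAlgebra.ofCoeff_single]
    conv_rhs => rw [hv, map_sum, map_sum]
    refine Finset.sum_congr rfl fun g _ => ?_
    rw [hsingle, map_zsmul, zsmul_eq_mul]
  have hχU : ∀ n : ℕ, χ ↑(u ^ n) = LinearMap.trace ℂ V (U ^ n) := by
    intro n
    rw [hχΨ, Units.val_pow_eq_pow_val, map_pow]
  obtain ⟨m, htr⟩ := aux_trace U k hk hUk z hz
  set F : ℂ → ℂ := fun ξ => (∑ c ∈ Finset.range k, (m c : ℂ) * ξ ^ c) * ξ ^ (-l) with hF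
  have hFapp : ∀ ξ : ℂ, F ξ = (∑ c ∈ Finset.range k, (m c : ℂ) * ξ ^ c) * ξ ^ (-l) :=
    fun ξ => rfl
  -- per-divisor analysis
  have main : ∀ d, d ∈ k.divisors →
      ∃ x : IntermediateField.adjoin ℚ {z ^ d},
        (x : ℂ) = χ ↑(u ^ d) * z ^ (-(d : ℤ) * l) ∧
        algebraMap ℚ ℂ (Algebra.trace ℚ (IntermediateField.adjoin ℚ {z ^ d}) x)
          = ∑ ξ ∈ primitiveRoots (k / d) ℂ, F ξ := by
    intro d hd
    obtain ⟨hdvd, -⟩ := Nat.mem_divisors.1 hd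
    have hd0 : 0 < d := Nat.pos_of_dvd_of_pos hdvd hk
    have he : 0 < k / d := Nat.div_pos (Nat.le_of_dvd hk hdvd) hd0
    have hke : k = d * (k / d) := (Nat.mul_div_cancel' hdvd).symm
    have hze : IsPrimitiveRoot (z ^ d) (k / d) := hz.pow hk hke
    have hzd0 : z ^ d ≠ 0 := pow_ne_zero _ hz0
    have hint : IsIntegral ℚ (z ^ d) := by
      refine ⟨Polynomial.X ^ (k / d) - 1, ?_, ?_⟩
      · simpa using Polynomial.monic_X_pow_sub_C (1 : ℚ) he.ne'
      · simp [hze.pow_eq_one]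
    haveI : FiniteDimensional ℚ (IntermediateField.adjoin ℚ {z ^ d}) :=
      IntermediateField.adjoin.finiteDimensional hint
    set η : IntermediateField.adjoin ℚ {z ^ d} :=
      IntermediateField.AdjoinSimple.gen ℚ (z ^ d) with hηdef
    have hηco : (η : ℂ) = z ^ d := rfl
    have hηe : IsPrimitiveRoot η (k / d) := by
      apply IsPrimitiveRoot.coe_submonoidClass_iff.1
      exact hze
    have hηe' : IsPrimitiveRoot η ((⟨k / d, he⟩ : ℕ+) : ℕ) := hηe
    haveI : NeZero (k / d) := ⟨he.ne'⟩
    haveI : NeZero ((⟨k / d, he⟩ : ℕ+) : ℕ) := ⟨he.ne'⟩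
    haveI : IsCyclotomicExtension {k / d} ℚ (IntermediateField.adjoin ℚ {z ^ d}) := by
      have H := IntermediateField.adjoin_simple_toSubalgebra_of_isAlgebraic hint.isAlgebraic
      refine IsCyclotomicExtension.equiv _ _ _ (h := ?_)
        (.refl : (IntermediateField.adjoin ℚ {z ^ d}).toSubalgebra ≃ₐ[ℚ] _)
      rw [H]
      exact IsPrimitiveRoot.adjoin_isCyclotomicExtension ℚ (n := k / d) hze
    have hirr : Irreducible (Polynomial.cyclotomic ((⟨k / d, he⟩ : ℕ+) : ℕ) ℚ) :=
      Polynomial.cyclotomic.irreducible_rat he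
    set x : IntermediateField.adjoin ℚ {z ^ d} :=
      (∑ c ∈ Finset.range k, (m c : IntermediateField.adjoin ℚ {z ^ d}) * η ^ c) * η ^ (-l)
      with hx
    have hσ : ∀ ψ : (IntermediateField.adjoin ℚ {z ^ d}) →ₐ[ℚ] ℂ, ψ x = F (ψ η) := by
      intro ψ
      rw [hFapp, hx, map_mul, map_sum, map_zpow₀]
      simp only [map_mul, map_pow, map_natCast]
    have hcoe : (x : ℂ) = χ ↑(u ^ d) * z ^ (-(d : ℤ) * l) := by
      have h1 : (x : ℂ) = F (z ^ d) := hσ (IntermediateField.adjoin ℚ {z ^ d}).val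
      rw [h1, hFapp, hχU d, htr d]
      have h2 : ((z ^ d : ℂ)) ^ (-l) = z ^ (-(d : ℤ) * l) := by
        rw [← zpow_natCast z d, ← zpow_mul]
        congr 1
        ring
      rw [h2]
      congr 1
      refine Finset.sum_congr rfl fun c _ => ?_
      rw [← pow_mul, mul_comm d c]
    refine ⟨x, hcoe, ?_⟩
    rw [trace_eq_sum_embeddings (E := ℂ)]
    rw [Finset.sum_congr rfl (fun ψ _ => hσ ψ)]
    rw [← Finset.sum_coe_sort (primitiveRoots (k / d) ℂ) F]
    exact Fintype.sum_equiv (hηe'.embeddingsEquivPrimitiveRoots ℂ hirr) _ _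
      (fun ψ => by rw [hηe'.embeddingsEquivPrimitiveRoots_apply_coe ℂ hirr ψ])
  -- the membership part
  have hmem : ∀ d ∈ k.divisors,
      χ ((u ^ d : (MonoidAlgebra ℤ G)ˣ) : MonoidAlgebra ℤ G) * z ^ (-(d : ℤ) * l)
        ∈ IntermediateField.adjoin ℚ {z ^ d} := by
    intro d hd
    obtain ⟨x, hx, -⟩ := main d hd
    rw [← hx]
    exact x.2
  -- the distinguished residue
  have hlk1 : 0 ≤ l % (k : ℤ) := Int.emod_nonneg l (by exact_mod_cast hk.ne')
  have hlk2 : l % (k : ℤ) < k := Int.emod_lt_of_pos l (by exact_mod_cast hk)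
  refine ⟨hmem, m (l % (k : ℤ)).toNat, ?_⟩
  set c₀ : ℕ := (l % (k : ℤ)).toNat with hc₀def
  have hc₀ : c₀ ∈ Finset.range k := Finset.mem_range.2 (by omega)
  have hiff : ∀ c ∈ Finset.range k, (z ^ c * (z ^ l)⁻¹ = 1 ↔ c = c₀) := by
    intro c hc
    rw [Finset.mem_range] at hc
    have hrw : z ^ c * (z ^ l)⁻¹ = z ^ ((c : ℤ) - l) := by
      rw [zpow_sub₀ hz0, zpow_natCast, div_eq_mul_inv]
    rw [hrw, hz.zpow_eq_one_iff_dvd]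
    constructor
    · intro hdvd
      have h1 : l % (k : ℤ) = (c : ℤ) % (k : ℤ) := Int.modEq_iff_dvd.mpr hdvd
      have h2 : (c : ℤ) % (k : ℤ) = c := Int.emod_eq_of_lt (by positivity) (by exact_mod_cast hc)
      have hcc : c₀ = c := by rw [hc₀def, h1, h2, Int.toNat_natCast]
      exact hcc.symm
    · rintro rfl
      have h3 : ((c₀ : ℕ) : ℤ) = l % (k : ℤ) := Int.toNat_of_nonneg hlk1
      refine ⟨-(l / (k : ℤ)), ?_⟩
      rw [h3, Int.emod_def]
      ring
  have hgsum : ∀ c ∈ Finset.range k,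
      ∑ j ∈ Finset.range k, (z ^ c * (z ^ l)⁻¹) ^ j = if c = c₀ then (k : ℂ) else 0 := by
    intro c hc
    by_cases h : c = c₀
    · rw [if_pos h, (hiff c hc).2 h]
      simp
    · rw [if_neg h]
      refine aux_geom k _ ?_ (fun h1 => h ((hiff c hc).1 h1))
      rw [mul_pow, ← pow_mul, mul_comm c k, pow_mul, hz.pow_eq_one, one_pow, inv_pow,
        ← zpow_natCast (z ^ l) k, ← zpow_mul, mul_comm l (k : ℤ), zpow_mul, zpow_natCast,
        hz.pow_eq_one, one_zpow, inv_one, one_mul]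
  -- the image of range k under powers of z
  have himage : Finset.image (fun j => z ^ j) (Finset.range k) = Polynomial.nthRootsFinset k (1 : ℂ) := by
    apply Finset.eq_of_subset_of_card_le
    · intro ξ hξ
      obtain ⟨j, hj, rfl⟩ := Finset.mem_image.1 hξ
      rw [Polynomial.mem_nthRootsFinset hk, ← pow_mul, mul_comm j k, pow_mul,
        hz.pow_eq_one, one_pow]
    · rw [hz.card_nthRootsFinset, Finset.card_image_of_injOn
        (fun a ha b hb hab => hz.pow_inj (Finset.mem_range.1 ha) (Finset.mem_range.1 hb) hab),
        Finset.card_range]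
  have hkQ0 : (k : ℚ) ≠ 0 := by exact_mod_cast hk.ne'
  have hsum : ∑ d ∈ k.divisors.attach,
      Algebra.trace ℚ (IntermediateField.adjoin ℚ {z ^ (d : ℕ)})
        ⟨χ ((u ^ (d : ℕ) : (MonoidAlgebra ℤ G)ˣ) : MonoidAlgebra ℤ G) *
            z ^ (-((d : ℕ) : ℤ) * l), hmem d d.2⟩
      = (k : ℚ) * m c₀ := by
    apply (algebraMap ℚ ℂ).injective
    rw [map_sum, map_mul, map_natCast, map_natCast]
    have hterm : ∀ d : {y // y ∈ k.divisors},
        algebraMap ℚ ℂ (Algebra.trace ℚ (IntermediateField.adjoin ℚ {z ^ (d : ℕ)})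
          ⟨χ ((u ^ (d : ℕ) : (MonoidAlgebra ℤ G)ˣ) : MonoidAlgebra ℤ G) *
            z ^ (-((d : ℕ) : ℤ) * l), hmem d d.2⟩)
        = ∑ ξ ∈ primitiveRoots (k / (d : ℕ)) ℂ, F ξ := by
      intro d
      obtain ⟨x, hx, htrx⟩ := main d d.2
      have hsub : (⟨χ ((u ^ (d : ℕ) : (MonoidAlgebra ℤ G)ˣ) : MonoidAlgebra ℤ G) *
          z ^ (-((d : ℕ) : ℤ) * l), hmem d d.2⟩ :
          IntermediateField.adjoin ℚ {z ^ (d : ℕ)}) = x := Subtype.ext hx.symm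
      rw [hsub, htrx]
    rw [Finset.sum_congr rfl (fun d _ => hterm d)]
    calc ∑ d ∈ k.divisors.attach, ∑ ξ ∈ primitiveRoots (k / (d : ℕ)) ℂ, F ξ
        = ∑ d ∈ k.divisors, ∑ ξ ∈ primitiveRoots (k / d) ℂ, F ξ :=
          Finset.sum_attach k.divisors (fun i => ∑ ξ ∈ primitiveRoots (k / i) ℂ, F ξ)
      _ = ∑ d ∈ k.divisors, ∑ ξ ∈ primitiveRoots d ℂ, F ξ :=
          Nat.sum_div_divisors k (fun i => ∑ ξ ∈ primitiveRoots i ℂ, F ξ)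
      _ = ∑ ξ ∈ (Nat.divisors k).biUnion (fun i => primitiveRoots i ℂ), F ξ :=
          (Finset.sum_biUnion (fun i _ j _ hij => IsPrimitiveRoot.disjoint hij)).symm
      _ = ∑ ξ ∈ Polynomial.nthRootsFinset k (1 : ℂ), F ξ := by
          rw [← IsPrimitiveRoot.nthRoots_one_eq_biUnion_primitiveRoots]
      _ = ∑ j ∈ Finset.range k, F (z ^ j) := by
          rw [← himage, Finset.sum_image
            (fun a ha b hb hab => hz.pow_inj (Finset.mem_range.1 ha) (Finset.mem_range.1 hb) hab)]
      _ = ∑ j ∈ Finset.range k, ∑ c ∈ Finset.range k, (m c : ℂ) * (z ^ c * (z ^ l)⁻¹) ^ j := by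
          refine Finset.sum_congr rfl fun j _ => ?_
          rw [hFapp]
          rw [Finset.sum_mul]
          refine Finset.sum_congr rfl fun c _ => ?_
          rw [mul_assoc, mul_pow]
          congr 2
          · rw [← pow_mul, ← pow_mul, mul_comm j c]
          · rw [← zpow_natCast z j, ← zpow_mul, mul_comm ((j : ℤ)) (-l), zpow_mul,
              zpow_natCast, zpow_neg]
      _ = ∑ c ∈ Finset.range k, (m c : ℂ) * ∑ j ∈ Finset.range k, (z ^ c * (z ^ l)⁻¹) ^ j := by
          rw [Finset.sum_comm]
          exact Finset.sum_congr rfl fun c _ => (Finset.mul_sum _ _ _).symm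
      _ = ∑ c ∈ Finset.range k, (m c : ℂ) * (if c = c₀ then (k : ℂ) else 0) :=
          Finset.sum_congr rfl fun c hc => by rw [hgsum c hc]
      _ = (k : ℂ) * m c₀ := by
          rw [Finset.sum_eq_single c₀]
          · rw [if_pos rfl, mul_comm]
          · intro c _ hcne
            rw [if_neg hcne, mul_zero]
          · intro h
            exact absurd hc₀ h
  rw [hsum, one_div, inv_mul_cancel_left₀ hkQ0]
end

section
/- For integers x, y with x + y = 1, the four rational numbers (1/29)((15x − 14y) + 8192), (1/29)(−(15x − 14y) + 2219), (1/29)(12x − 17y + 133), (1/29)(−17x + 12y + 133) are all non-negative integers if and only if −4 ≤ x ≤ 5. In particular, there are exactly 10 such pairs (x, y). -/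
lemma aux29 (a : ℤ) : (∃ n : ℕ, ((29 * a : ℤ) : ℚ) / 29 = n) ↔ 0 ≤ a := by
  constructor
  · rintro ⟨n, hn⟩
    have : (a : ℚ) = n := by
      field_simp at hn
      push_cast at hn
      linarith
    have : a = (n : ℤ) := by exact_mod_cast this
    omega
  · intro h
    refine ⟨a.toNat, ?_⟩
    have h2 : ((a.toNat : ℕ) : ℚ) = (a : ℚ) := by exact_mod_cast Int.toNat_of_nonneg h
    rw [h2]
    push_cast
    ring

lemma main29 (x y : ℤ) (hxy : x + y = 1) :
    (((∃ n : ℕ, (((15 * x - 14 * y) + 8192 : ℤ) : ℚ) / 29 = n) ∧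
        (∃ n : ℕ, ((-(15 * x - 14 * y) + 2219 : ℤ) : ℚ) / 29 = n) ∧
        (∃ n : ℕ, ((12 * x - 17 * y + 133 : ℤ) : ℚ) / 29 = n) ∧
        (∃ n : ℕ, ((-17 * x + 12 * y + 133 : ℤ) : ℚ) / 29 = n)) ↔
       (-4 ≤ x ∧ x ≤ 5)) := by
  have hy : y = 1 - x := by omega
  subst hy
  have e1 : (15 * x - 14 * (1 - x)) + 8192 = 29 * (x + 282) := by ring
  have e2 : -(15 * x - 14 * (1 - x)) + 2219 = 29 * (77 - x) := by ring
  have e3 : 12 * x - 17 * (1 - x) + 133 = 29 * (x + 4) := by ring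
  have e4 : -17 * x + 12 * (1 - x) + 133 = 29 * (5 - x) := by ring
  rw [e1, e2, e3, e4, aux29, aux29, aux29, aux29]
  omega

/-- Luthar–Passi constraints for units of order 29 in `V(ℤRu)`: for integers `x, y`
with `x + y = 1`, the four rationals `(1/29)((15x − 14y) + 8192)`,
`(1/29)(−(15x − 14y) + 2219)`, `(1/29)(12x − 17y + 133)`, `(1/29)(−17x + 12y + 133)`
are all non-negative integers iff `−4 ≤ x ≤ 5`; in particular there are exactly
10 such pairs. -/
theorem order29_constraints_Ru :
    (∀ x y : ℤ, x + y = 1 →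
      (((∃ n : ℕ, (((15 * x - 14 * y) + 8192 : ℤ) : ℚ) / 29 = n) ∧
        (∃ n : ℕ, ((-(15 * x - 14 * y) + 2219 : ℤ) : ℚ) / 29 = n) ∧
        (∃ n : ℕ, ((12 * x - 17 * y + 133 : ℤ) : ℚ) / 29 = n) ∧
        (∃ n : ℕ, ((-17 * x + 12 * y + 133 : ℤ) : ℚ) / 29 = n)) ↔
       (-4 ≤ x ∧ x ≤ 5))) ∧
    {p : ℤ × ℤ | p.1 + p.2 = 1 ∧
        (∃ n : ℕ, (((15 * p.1 - 14 * p.2) + 8192 : ℤ) : ℚ) / 29 = n) ∧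
        (∃ n : ℕ, ((-(15 * p.1 - 14 * p.2) + 2219 : ℤ) : ℚ) / 29 = n) ∧
        (∃ n : ℕ, ((12 * p.1 - 17 * p.2 + 133 : ℤ) : ℚ) / 29 = n) ∧
        (∃ n : ℕ, ((-17 * p.1 + 12 * p.2 + 133 : ℤ) : ℚ) / 29 = n)}.ncard = 10 := by
  refine ⟨fun x y h => main29 x y h, ?_⟩
  have hset : {p : ℤ × ℤ | p.1 + p.2 = 1 ∧
        (∃ n : ℕ, (((15 * p.1 - 14 * p.2) + 8192 : ℤ) : ℚ) / 29 = n) ∧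
        (∃ n : ℕ, ((-(15 * p.1 - 14 * p.2) + 2219 : ℤ) : ℚ) / 29 = n) ∧
        (∃ n : ℕ, ((12 * p.1 - 17 * p.2 + 133 : ℤ) : ℚ) / 29 = n) ∧
        (∃ n : ℕ, ((-17 * p.1 + 12 * p.2 + 133 : ℤ) : ℚ) / 29 = n)} =
      ↑((Finset.Icc (-4 : ℤ) 5).image (fun x => (x, 1 - x))) := by
    ext ⟨x, y⟩
    simp only [Set.mem_setOf_eq, Finset.coe_image, Set.mem_image, Finset.mem_coe,
      Finset.mem_Icc, Prod.mk.injEq]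
    constructor
    · rintro ⟨h1, h2⟩
      have := (main29 x y h1).mp h2
      exact ⟨x, by omega, rfl, by omega⟩
    · rintro ⟨a, ha, h1, h2⟩
      subst h1; subst h2
      have h1 : a + (1 - a) = 1 := by ring
      exact ⟨h1, (main29 a (1 - a) h1).mpr (by omega)⟩
  rw [hset, Set.ncard_coe_finset,
    Finset.card_image_of_injective _ (fun a b h => (Prod.mk.injEq _ _ _ _ ▸ h).1)]
  rfl
end

section
/- There are no integers a, b with a + b = 1 such that the three rational numbers (1/21)(a + 405), (1/21)(12a + 30), (1/21)(−6a + 27) are all non-negative integers. -/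
/-- Luthar–Passi constraints excluding units of order 21 in `V(ℤRu)`: there are no
integers `a, b` with `a + b = 1` such that `(1/21)(a + 405)`, `(1/21)(12a + 30)` and
`(1/21)(−6a + 27)` are all non-negative integers. -/
theorem no_order21_unit_Ru :
    ¬ ∃ a b : ℤ, a + b = 1 ∧
      (∃ n : ℕ, ((a + 405 : ℤ) : ℚ) / 21 = n) ∧
      (∃ n : ℕ, ((12 * a + 30 : ℤ) : ℚ) / 21 = n) ∧
      (∃ n : ℕ, ((-6 * a + 27 : ℤ) : ℚ) / 21 = n) := by
  rintro ⟨a, b, hab, ⟨n1, h1⟩, ⟨n2, h2⟩, ⟨n3, h3⟩⟩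
  rw [div_eq_iff (by norm_num : (21:ℚ) ≠ 0)] at h1 h2 h3
  have e1 : (a + 405 : ℤ) = n1 * 21 := by exact_mod_cast h1
  have e2 : (12 * a + 30 : ℤ) = n2 * 21 := by exact_mod_cast h2
  have e3 : (-6 * a + 27 : ℤ) = n3 * 21 := by exact_mod_cast h3
  omega
end

section
/- There are no integers a, b, c with a + b + c = 1 such that, setting t = a + b, the two rational numbers (1/35)(72t + 390) and (1/35)(−96t + 1230) are both non-negative integers. -/
/-- Luthar–Passi constraints excluding units of order 35 in `V(ℤRu)`: there are no
integers `a, b, c` with `a + b + c = 1` such that, with `t = a + b`, the rationals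
`(1/35)(72t + 390)` and `(1/35)(−96t + 1230)` are both non-negative integers. -/
theorem no_order35_unit_Ru :
    ¬ ∃ a b c : ℤ, a + b + c = 1 ∧
      (∃ n : ℕ, ((72 * (a + b) + 390 : ℤ) : ℚ) / 35 = n) ∧
      (∃ n : ℕ, ((-96 * (a + b) + 1230 : ℤ) : ℚ) / 35 = n) := by
  rintro ⟨a, b, c, -, ⟨n, hn⟩, ⟨m, hm⟩⟩
  have h1 : (72 * (a + b) + 390 : ℤ) = 35 * n := by
    have : ((72 * (a + b) + 390 : ℤ) : ℚ) = 35 * n := by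
      field_simp at hn; push_cast at hn ⊢; linarith
    exact_mod_cast this
  have h2 : (-96 * (a + b) + 1230 : ℤ) = 35 * m := by
    have : ((-96 * (a + b) + 1230 : ℤ) : ℚ) = 35 * m := by
      field_simp at hm; push_cast at hm ⊢; linarith
    exact_mod_cast this
  omega
end

section
/- There are no integers a, c with a + c = 1 such that the four rational numbers (1/39)(72c + 819), (1/39)(−36c + 819), (1/39)(c + 377), (1/39)(−12a − 24c + 51) are all non-negative integers. -/
/-- Luthar–Passi constraints excluding units of order 39 in `V(ℤRu)`: there are no
integers `a, c` with `a + c = 1` such that `(1/39)(72c + 819)`, `(1/39)(−36c + 819)`,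
`(1/39)(c + 377)` and `(1/39)(−12a − 24c + 51)` are all non-negative integers. -/
theorem no_order39_unit_Ru :
    ¬ ∃ a c : ℤ, a + c = 1 ∧
      (∃ n : ℕ, ((72 * c + 819 : ℤ) : ℚ) / 39 = n) ∧
      (∃ n : ℕ, ((-36 * c + 819 : ℤ) : ℚ) / 39 = n) ∧
      (∃ n : ℕ, ((c + 377 : ℤ) : ℚ) / 39 = n) ∧
      (∃ n : ℕ, ((-12 * a - 24 * c + 51 : ℤ) : ℚ) / 39 = n) := by
  rintro ⟨a, c, hac, ⟨n1, h1⟩, ⟨n2, h2⟩, ⟨n3, h3⟩, ⟨n4, h4⟩⟩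
  rw [div_eq_iff (by norm_num)] at h1 h2 h3 h4
  have e1 : (72 * c + 819 : ℤ) = n1 * 39 := by exact_mod_cast h1
  have e2 : (-36 * c + 819 : ℤ) = n2 * 39 := by exact_mod_cast h2
  have e3 : (c + 377 : ℤ) = n3 * 39 := by exact_mod_cast h3
  have e4 : (-12 * a - 24 * c + 51 : ℤ) = n4 * 39 := by exact_mod_cast h4
  omega
end

section
/- For every pair (α, β) in the list {(466,436), (446,441), (546,416), (486,431), (566,411), (506,426), (426,446), (526,421)}, there are no integers a, b, c with a + b + c = 1 such that, setting t1 = 3a + 3b + c and t2 = 6a + b + 3c, the four rational numbers (1/65)(48·t1 + 402), (1/65)(−12·t1 + 387), (1/65)(48·t2 + α), (1/65)(−12·t2 + β) are all non-negative integers. -/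
/-- Luthar–Passi constraints excluding units of order 65 in `V(ℤRu)`: for every pair
`(α, β)` among the eight listed pairs, there are no integers `a, b, c` with
`a + b + c = 1` such that, with `t1 = 3a + 3b + c` and `t2 = 6a + b + 3c`, the
rationals `(1/65)(48t1 + 402)`, `(1/65)(−12t1 + 387)`, `(1/65)(48t2 + α)` and
`(1/65)(−12t2 + β)` are all non-negative integers. -/
theorem no_order65_unit_Ru :
    ∀ α β : ℤ, (α, β) ∈ [((466 : ℤ), (436 : ℤ)), (446, 441), (546, 416), (486, 431),
        (566, 411), (506, 426), (426, 446), (526, 421)] →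
      ¬ ∃ a b c : ℤ, a + b + c = 1 ∧
        (∃ n : ℕ, ((48 * (3 * a + 3 * b + c) + 402 : ℤ) : ℚ) / 65 = n) ∧
        (∃ n : ℕ, ((-12 * (3 * a + 3 * b + c) + 387 : ℤ) : ℚ) / 65 = n) ∧
        (∃ n : ℕ, ((48 * (6 * a + b + 3 * c) + α : ℤ) : ℚ) / 65 = n) ∧
        (∃ n : ℕ, ((-12 * (6 * a + b + 3 * c) + β : ℤ) : ℚ) / 65 = n) := by
  intro α β _hmem
  rintro ⟨a, b, c, habc, ⟨m, hm⟩, ⟨n, hn⟩, -, -⟩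
  rw [div_eq_iff (by norm_num : (65 : ℚ) ≠ 0)] at hm hn
  have hm' : (48 * (3 * a + 3 * b + c) + 402 : ℤ) = (m : ℤ) * 65 := by exact_mod_cast hm
  have hn' : (-12 * (3 * a + 3 * b + c) + 387 : ℤ) = (n : ℤ) * 65 := by exact_mod_cast hn
  omega
end

section
/- There are no integers a, b, c with a + b + c = 1 such that, setting t = b + c, the two rational numbers (1/87)(56t + 406) and (1/87)(−28t + 406) are both non-negative integers. -/
/-- Luthar–Passi constraints excluding units of order 87 in `V(ℤRu)`: there are no
integers `a, b, c` with `a + b + c = 1` such that, with `t = b + c`, the rationals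
`(1/87)(56t + 406)` and `(1/87)(−28t + 406)` are both non-negative integers. -/
theorem no_order87_unit_Ru :
    ¬ ∃ a b c : ℤ, a + b + c = 1 ∧
      (∃ n : ℕ, ((56 * (b + c) + 406 : ℤ) : ℚ) / 87 = n) ∧
      (∃ n : ℕ, ((-28 * (b + c) + 406 : ℤ) : ℚ) / 87 = n) := by
  rintro ⟨a, b, c, -, ⟨m, hm⟩, ⟨n, hn⟩⟩
  rw [div_eq_iff (by norm_num)] at hm hn
  have h1 : (56 * (b + c) + 406 : ℤ) = m * 87 := by exact_mod_cast hm
  have h2 : (-28 * (b + c) + 406 : ℤ) = n * 87 := by exact_mod_cast hn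
  omega
end

section
/- There are no integers a, c with a + c = 1 such that the two rational numbers (1/91)(144c + 52) and (1/91)(−12c + 26) are both non-negative integers. -/
/-- Luthar–Passi constraints excluding units of order 91 in `V(ℤRu)`: there are no
integers `a, c` with `a + c = 1` such that `(1/91)(144c + 52)` and
`(1/91)(−12c + 26)` are both non-negative integers. -/
theorem no_order91_unit_Ru :
    ¬ ∃ a c : ℤ, a + c = 1 ∧
      (∃ n : ℕ, ((144 * c + 52 : ℤ) : ℚ) / 91 = n) ∧
      (∃ n : ℕ, ((-12 * c + 26 : ℤ) : ℚ) / 91 = n) := by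
  rintro ⟨a, c, hac, ⟨m, hm⟩, ⟨n, hn⟩⟩
  have hm' : (144 * c + 52 : ℤ) = m * 91 := by
    have := hm
    field_simp at this
    qify
    push_cast at this ⊢
    linarith
  have hn' : (-(12 * c) + 26 : ℤ) = n * 91 := by
    have := hn
    field_simp at this
    qify
    push_cast at this ⊢
    linarith
  omega
end

section
/- There are no integers a, b, c, e with a + b + c + e = 1 such that, setting t = 3a + 3b + c + e, the two rational numbers (1/145)(112t + 418) and (1/145)(−28t + 403) are both non-negative integers. -/
/-- Luthar–Passi constraints excluding units of order 145 in `V(ℤRu)`: there are no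
integers `a, b, c, e` with `a + b + c + e = 1` such that, with
`t = 3a + 3b + c + e`, the rationals `(1/145)(112t + 418)` and `(1/145)(−28t + 403)`
are both non-negative integers. -/
theorem no_order145_unit_Ru :
    ¬ ∃ a b c e : ℤ, a + b + c + e = 1 ∧
      (∃ n : ℕ, ((112 * (3 * a + 3 * b + c + e) + 418 : ℤ) : ℚ) / 145 = n) ∧
      (∃ n : ℕ, ((-28 * (3 * a + 3 * b + c + e) + 403 : ℤ) : ℚ) / 145 = n) := by
  rintro ⟨a, b, c, e, h, ⟨m, hm⟩, ⟨n, hn⟩⟩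
  rw [div_eq_iff (by norm_num : (145 : ℚ) ≠ 0)] at hm hn
  have hm' : (112 * (3 * a + 3 * b + c + e) + 418 : ℤ) = m * 145 := by exact_mod_cast hm
  have hn' : (-28 * (3 * a + 3 * b + c + e) + 403 : ℤ) = n * 145 := by exact_mod_cast hn
  omega
end

section
/- There are no integers a, b, c with a + b + c = 1 such that, setting t = b + c, the three rational numbers (1/203)(28t), (1/203)(−168t), (1/203)(t + 377) are all non-negative integers. -/
/-- Luthar–Passi constraints excluding units of order 203 in `V(ℤRu)`: there are no
integers `a, b, c` with `a + b + c = 1` such that, with `t = b + c`, the rationals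
`(1/203)(28t)`, `(1/203)(−168t)` and `(1/203)(t + 377)` are all non-negative
integers. -/
theorem no_order203_unit_Ru :
    ¬ ∃ a b c : ℤ, a + b + c = 1 ∧
      (∃ n : ℕ, ((28 * (b + c) : ℤ) : ℚ) / 203 = n) ∧
      (∃ n : ℕ, ((-168 * (b + c) : ℤ) : ℚ) / 203 = n) ∧
      (∃ n : ℕ, (((b + c) + 377 : ℤ) : ℚ) / 203 = n) := by
  rintro ⟨a, b, c, hsum, ⟨n, h1⟩, ⟨m, h2⟩, ⟨k, h3⟩⟩
  have e1 : (28 * (b + c) : ℤ) = 203 * n := by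
    have : ((28 * (b + c) : ℤ) : ℚ) = 203 * n := by field_simp at h1; push_cast at h1 ⊢; linarith
    exact_mod_cast this
  have e2 : (-168 * (b + c) : ℤ) = 203 * m := by
    have : ((-168 * (b + c) : ℤ) : ℚ) = 203 * m := by field_simp at h2; push_cast at h2 ⊢; linarith
    exact_mod_cast this
  have e3 : ((b + c) + 377 : ℤ) = 203 * k := by
    have : (((b + c) + 377 : ℤ) : ℚ) = 203 * k := by field_simp at h3; push_cast at h3 ⊢; linarith
    exact_mod_cast this
  omega
end

section
/- There are no integers a, b, c with a + b + c = 1 such that the two rational numbers (1/377)(1008a + 442) and (1/377)(−84a + 403) are both non-negative integers. -/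
/-- Luthar–Passi constraints excluding units of order 377 in `V(ℤRu)`: there are no
integers `a, b, c` with `a + b + c = 1` such that `(1/377)(1008a + 442)` and
`(1/377)(−84a + 403)` are both non-negative integers. -/
theorem no_order377_unit_Ru :
    ¬ ∃ a b c : ℤ, a + b + c = 1 ∧
      (∃ n : ℕ, ((1008 * a + 442 : ℤ) : ℚ) / 377 = n) ∧
      (∃ n : ℕ, ((-84 * a + 403 : ℤ) : ℚ) / 377 = n) := by
  rintro ⟨a, b, c, hsum, ⟨n1, h1⟩, ⟨n2, h2⟩⟩
  rw [div_eq_iff (by norm_num : (377 : ℚ) ≠ 0)] at h1 h2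
  have e1 : (1008 * a + 442 : ℤ) = n1 * 377 := by exact_mod_cast h1
  have e2 : (-84 * a + 403 : ℤ) = n2 * 377 := by exact_mod_cast h2
  omega
end

section
/- For every x in the set {1, −5, −10, −2, −8, 6, 3, 9, 4}, there are no integers a, b, c, e with a + b + c + e = 1 such that, setting t1 = 6a − 14b − c − e, the three rational numbers (1/58)(−28·t1 + 420 − 20x), (1/58)(28·t1 + 392 + 20x), (1/58)(−t1 + 363 + 20x) are all non-negative integers. -/
private lemma aux58 (A : ℤ) (h : ∃ n : ℕ, (A : ℚ) / 58 = n) : ∃ n : ℕ, A = 58 * n := by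
  obtain ⟨n, hn⟩ := h
  refine ⟨n, ?_⟩
  have : (A : ℚ) = 58 * n := by field_simp at hn; linarith
  exact_mod_cast this

/-- Luthar–Passi constraints excluding units of order 58 in `V(ℤRu)`, first family of
cases: for every `x` in `{1, −5, −10, −2, −8, 6, 3, 9, 4}`, there are no integers
`a, b, c, e` with `a + b + c + e = 1` such that, with `t1 = 6a − 14b − c − e`, the
rationals `(1/58)(−28t1 + 420 − 20x)`, `(1/58)(28t1 + 392 + 20x)` and
`(1/58)(−t1 + 363 + 20x)` are all non-negative integers. -/
theorem no_order58_unit_Ru_first_family :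
    ∀ x : ℤ, x ∈ ({1, -5, -10, -2, -8, 6, 3, 9, 4} : Set ℤ) →
      ¬ ∃ a b c e : ℤ, a + b + c + e = 1 ∧
        (∃ n : ℕ, ((-28 * (6 * a - 14 * b - c - e) + 420 - 20 * x : ℤ) : ℚ) / 58 = n) ∧
        (∃ n : ℕ, ((28 * (6 * a - 14 * b - c - e) + 392 + 20 * x : ℤ) : ℚ) / 58 = n) ∧
        (∃ n : ℕ, ((-(6 * a - 14 * b - c - e) + 363 + 20 * x : ℤ) : ℚ) / 58 = n) := by
  intro x hx
  rintro ⟨a, b, c, e, hsum, h1, h2, h3⟩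
  obtain ⟨n1, h1⟩ := aux58 _ h1
  obtain ⟨n2, h2⟩ := aux58 _ h2
  obtain ⟨n3, h3⟩ := aux58 _ h3
  simp only [Set.mem_insert_iff, Set.mem_singleton_iff] at hx
  rcases hx with rfl | rfl | rfl | rfl | rfl | rfl | rfl | rfl | rfl <;> omega
end

section
/- For every x in the set {0, 5, −9, −6, 2, 8, −3, −4, 11, 10, 7, −1, −7} and every integer y with −4 ≤ y ≤ 5, there are no integers a, b, c, e with a + b + c + e = 1 such that, setting t1 = 6a − 14b − c − e, t2 = 11a − 7b, t3 = 64b + 14c − 15e, the six rational numbers (1/58)(−28·t1 + 420 − 20x), (1/58)(28·t1 + 392 + 20x), (1/58)(56·t2 + 392 + 36x), (1/58)(−56·t2 + 420 − 36x), (1/58)(−t3 + 110670 − 64x − 29y), (1/58)(t3 + 110542 + 64x − 29y) are all non-negative integers and, additionally in the cases x ∈ {0, 7, −7}, the rational number (1/58)(−t1 + 363 + 20x) is also a non-negative integer. -/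
set_option maxHeartbeats 1000000



private lemma aux58_s18 (x a b c e : ℤ) (n1 n2 n3 n4 : ℕ)
    (hx : x = 5 ∨ x = -9 ∨ x = -6 ∨ x = 2 ∨ x = 8 ∨ x = -3 ∨ x = -4 ∨ x = 11 ∨ x = 10 ∨
      x = 7 ∨ x = -1 ∨ x = -7)
    (hsum : a + b + c + e = 1)
    (g1 : -28 * (6 * a - 14 * b - c - e) + 420 - 20 * x = (n1:ℤ) * 58)
    (g2 : 28 * (6 * a - 14 * b - c - e) + 392 + 20 * x = (n2:ℤ) * 58)
    (g3 : 56 * (11 * a - 7 * b) + 392 + 36 * x = (n3:ℤ) * 58)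
    (g4 : -56 * (11 * a - 7 * b) + 420 - 36 * x = (n4:ℤ) * 58) : False := by
  rcases hx with rfl | rfl | rfl | rfl | rfl | rfl | rfl | rfl | rfl | rfl | rfl | rfl <;> omega

private lemma aux58zero (a b c e : ℤ) (n1 n2 n3 n4 n7 : ℕ)
    (hsum : a + b + c + e = 1)
    (g1 : -28 * (6 * a - 14 * b - c - e) + 420 - 20 * 0 = (n1:ℤ) * 58)
    (g2 : 28 * (6 * a - 14 * b - c - e) + 392 + 20 * 0 = (n2:ℤ) * 58)
    (g3 : 56 * (11 * a - 7 * b) + 392 + 36 * 0 = (n3:ℤ) * 58)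
    (g4 : -56 * (11 * a - 7 * b) + 420 - 36 * 0 = (n4:ℤ) * 58)
    (g7 : -(6 * a - 14 * b - c - e) + 363 + 20 * 0 = (n7:ℤ) * 58) : False := by
  omega

/-- Luthar–Passi constraints excluding units of order 58 in `V(ℤRu)`, second family of
cases: for every `x` in `{0, 5, −9, −6, 2, 8, −3, −4, 11, 10, 7, −1, −7}` and every
integer `y` with `−4 ≤ y ≤ 5`, there are no integers `a, b, c, e` with
`a + b + c + e = 1` such that, with `t1 = 6a − 14b − c − e`, `t2 = 11a − 7b` and
`t3 = 64b + 14c − 15e`, the six rationals `(1/58)(−28t1 + 420 − 20x)`,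
`(1/58)(28t1 + 392 + 20x)`, `(1/58)(56t2 + 392 + 36x)`, `(1/58)(−56t2 + 420 − 36x)`,
`(1/58)(−t3 + 110670 − 64x − 29y)` and `(1/58)(t3 + 110542 + 64x − 29y)` are all
non-negative integers and, additionally when `x ∈ {0, 7, −7}`, the rational
`(1/58)(−t1 + 363 + 20x)` is also a non-negative integer. -/
theorem no_order58_unit_Ru_second_family :
    ∀ x : ℤ, x ∈ ({0, 5, -9, -6, 2, 8, -3, -4, 11, 10, 7, -1, -7} : Set ℤ) →
    ∀ y : ℤ, -4 ≤ y → y ≤ 5 →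
      ¬ ∃ a b c e : ℤ, a + b + c + e = 1 ∧
        (∃ n : ℕ, ((-28 * (6 * a - 14 * b - c - e) + 420 - 20 * x : ℤ) : ℚ) / 58 = n) ∧
        (∃ n : ℕ, ((28 * (6 * a - 14 * b - c - e) + 392 + 20 * x : ℤ) : ℚ) / 58 = n) ∧
        (∃ n : ℕ, ((56 * (11 * a - 7 * b) + 392 + 36 * x : ℤ) : ℚ) / 58 = n) ∧
        (∃ n : ℕ, ((-56 * (11 * a - 7 * b) + 420 - 36 * x : ℤ) : ℚ) / 58 = n) ∧
        (∃ n : ℕ, ((-(64 * b + 14 * c - 15 * e) + 110670 - 64 * x - 29 * y : ℤ) : ℚ) / 58 = n) ∧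
        (∃ n : ℕ, (((64 * b + 14 * c - 15 * e) + 110542 + 64 * x - 29 * y : ℤ) : ℚ) / 58 = n) ∧
        (x ∈ ({0, 7, -7} : Set ℤ) →
          ∃ n : ℕ, ((-(6 * a - 14 * b - c - e) + 363 + 20 * x : ℤ) : ℚ) / 58 = n) := by
  intro x hx y hy1 hy2
  rintro ⟨a, b, c, e, hsum, ⟨n1, h1⟩, ⟨n2, h2⟩, ⟨n3, h3⟩, ⟨n4, h4⟩, ⟨n5, h5⟩, ⟨n6, h6⟩, h7⟩
  rw [div_eq_iff (by norm_num : (58:ℚ) ≠ 0)] at h1 h2 h3 h4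
  have g1 : -28 * (6 * a - 14 * b - c - e) + 420 - 20 * x = (n1:ℤ) * 58 := by exact_mod_cast h1
  have g2 : 28 * (6 * a - 14 * b - c - e) + 392 + 20 * x = (n2:ℤ) * 58 := by exact_mod_cast h2
  have g3 : 56 * (11 * a - 7 * b) + 392 + 36 * x = (n3:ℤ) * 58 := by exact_mod_cast h3
  have g4 : -56 * (11 * a - 7 * b) + 420 - 36 * x = (n4:ℤ) * 58 := by exact_mod_cast h4
  simp only [Set.mem_insert_iff, Set.mem_singleton_iff] at hx
  rcases hx with rfl | hx
  · obtain ⟨n7, h7'⟩ := h7 (by norm_num)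
    rw [div_eq_iff (by norm_num : (58:ℚ) ≠ 0)] at h7'
    have g7 : -(6 * a - 14 * b - c - e) + 363 + 20 * 0 = (n7:ℤ) * 58 := by exact_mod_cast h7'
    exact aux58zero a b c e n1 n2 n3 n4 n7 hsum g1 g2 g3 g4 g7
  · exact aux58_s18 x a b c e n1 n2 n3 n4 hx hsum g1 g2 g3 g4
end
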